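/- N_=(3) = 6 and N_≥(3) = 5: every graph on 6 vertices contains a regular induced subgraph of order exactly 3, and there is a graph on 5 vertices with none; every graph on 5 vertices contains a regular induced subgraph of order at least 3, and there is a graph on 4 vertices with none. -/

import Mathlib

/-- The induced subgraph of `G` on `s` is regular: all vertices of `s` have the same
number of neighbours within `s`. -/
def RegOn {V : Type*} (G : SimpleGraph V) (s : Set V) : Prop :=
  ∃ d : ℕ, ∀ v ∈ s, (s ∩ {w | G.Adj v w}).ncard = d

/-- `G` has a regular induced subgraph of order exactly `k`. -/
def HasRegEq {V : Type*} (G : SimpleGraph V) (k : ℕ) : Prop :=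
  ∃ s : Set V, s.ncard = k ∧ RegOn G s

/-- `G` has a regular induced subgraph of order at least `k`. -/
def HasRegGe {V : Type*} (G : SimpleGraph V) (k : ℕ) : Prop :=
  ∃ s : Set V, k ≤ s.ncard ∧ RegOn G s

/-- The least `n` such that every graph on `n` vertices has a regular induced subgraph
of order exactly `k`. -/
noncomputable def Neq (k : ℕ) : ℕ :=
  sInf {n | ∀ G : SimpleGraph (Fin n), HasRegEq G k}

/-- The least `n` such that every graph on `n` vertices has a regular induced subgraph
of order at least `k`. -/
noncomputable def Nge (k : ℕ) : ℕ :=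
  sInf {n | ∀ G : SimpleGraph (Fin n), HasRegGe G k}

open Finset

set_option linter.unusedSectionVars false
set_option linter.unusedVariables false

section helpers
variable {V : Type*} [DecidableEq V]

lemma filter_triple (a b c : V) (p : V → Prop) [DecidablePred p]
    (ha : ¬ p a) (hb : p b) (hc : p c) :
    ({a,b,c} : Finset V).filter p = {b,c} := by
  ext x
  simp only [Finset.mem_filter, Finset.mem_insert, Finset.mem_singleton]
  constructor
  · rintro ⟨rfl | rfl | rfl, hp⟩
    · exact absurd hp ha
    · exact Or.inl rfl
    · exact Or.inr rfl
  · rintro (rfl | rfl)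
    · exact ⟨Or.inr (Or.inl rfl), hb⟩
    · exact ⟨Or.inr (Or.inr rfl), hc⟩

lemma filter_triple_none (a b c : V) (p : V → Prop) [DecidablePred p]
    (ha : ¬ p a) (hb : ¬ p b) (hc : ¬ p c) :
    ({a,b,c} : Finset V).filter p = ∅ := by
  ext x
  simp only [Finset.mem_filter, Finset.mem_insert, Finset.mem_singleton,
    Finset.notMem_empty, iff_false, not_and]
  rintro (rfl | rfl | rfl) <;> assumption

lemma ncard_coe_inter (t : Finset V) (p : V → Prop) [DecidablePred p] :
    ((t : Set V) ∩ {w | p w}).ncard = (t.filter p).card := by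
  rw [← Set.ncard_coe_finset (t.filter p)]
  congr 1
  ext x
  simp [Finset.mem_filter]

lemma hasRegEq_of_triple (G : SimpleGraph V) {a b c : V}
    (hab : a ≠ b) (hac : a ≠ c) (hbc : b ≠ c)
    (h : (G.Adj a b ∧ G.Adj a c ∧ G.Adj b c) ∨ (¬G.Adj a b ∧ ¬G.Adj a c ∧ ¬G.Adj b c)) :
    ∃ s : Set V, s.ncard = 3 ∧ RegOn G s := by
  classical
  refine ⟨(({a,b,c} : Finset V) : Set V), ?_, ?_⟩
  · rw [Set.ncard_coe_finset, Finset.card_eq_three]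
    exact ⟨a, b, c, hab, hac, hbc, rfl⟩
  · rcases h with ⟨h1, h2, h3⟩ | ⟨h1, h2, h3⟩
    · refine ⟨2, fun v hv => ?_⟩
      rw [ncard_coe_inter]
      simp only [Finset.mem_coe, Finset.mem_insert, Finset.mem_singleton] at hv
      rcases hv with rfl | rfl | rfl
      · rw [filter_triple v b c _ (G.irrefl) h1 h2, Finset.card_pair hbc]
      · have he : ({a,v,c} : Finset V) = {v,a,c} := Finset.insert_comm a v {c}
        rw [he, filter_triple v a c _ (G.irrefl) h1.symm h3, Finset.card_pair hac]
      · have he : ({a,b,v} : Finset V) = {v,a,b} := by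
          ext x
          simp only [Finset.mem_insert, Finset.mem_singleton]
          tauto
        rw [he, filter_triple v a b _ (G.irrefl) h2.symm h3.symm, Finset.card_pair hab]
    · refine ⟨0, fun v hv => ?_⟩
      rw [ncard_coe_inter]
      simp only [Finset.mem_coe, Finset.mem_insert, Finset.mem_singleton] at hv
      rcases hv with rfl | rfl | rfl
      · rw [filter_triple_none v b c _ (G.irrefl) h1 h2, Finset.card_empty]
      · rw [filter_triple_none a v c _ (fun h => h1 h.symm) (G.irrefl) h3, Finset.card_empty]
      · rw [filter_triple_none a b v _ (fun h => h2 h.symm) (fun h => h3 h.symm) (G.irrefl),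
          Finset.card_empty]

end helpers

section ram
variable {V : Type*} [Fintype V] [DecidableEq V]

lemma exists_triple (G : SimpleGraph V) [DecidableRel G.Adj] (v : V)
    (h : 2 < (univ.filter (G.Adj v)).card ∨
      2 < ((univ.erase v) \ univ.filter (G.Adj v)).card) :
    ∃ a b c, a ≠ b ∧ a ≠ c ∧ b ≠ c ∧
      ((G.Adj a b ∧ G.Adj a c ∧ G.Adj b c) ∨ (¬G.Adj a b ∧ ¬G.Adj a c ∧ ¬G.Adj b c)) := by
  rcases h with h | h
  · obtain ⟨a, b, c, ha, hb, hc, hab, hac, hbc⟩ := Finset.two_lt_card_iff.mp h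
    rw [Finset.mem_filter] at ha hb hc
    have hva : G.Adj v a := ha.2
    have hvb : G.Adj v b := hb.2
    have hvc : G.Adj v c := hc.2
    by_cases h1 : G.Adj a b
    · exact ⟨v, a, b, hva.ne, hvb.ne, hab, Or.inl ⟨hva, hvb, h1⟩⟩
    by_cases h2 : G.Adj a c
    · exact ⟨v, a, c, hva.ne, hvc.ne, hac, Or.inl ⟨hva, hvc, h2⟩⟩
    by_cases h3 : G.Adj b c
    · exact ⟨v, b, c, hvb.ne, hvc.ne, hbc, Or.inl ⟨hvb, hvc, h3⟩⟩
    · exact ⟨a, b, c, hab, hac, hbc, Or.inr ⟨h1, h2, h3⟩⟩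
  · obtain ⟨a, b, c, ha, hb, hc, hab, hac, hbc⟩ := Finset.two_lt_card_iff.mp h
    rw [Finset.mem_sdiff, Finset.mem_erase, Finset.mem_filter] at ha hb hc
    have hva : ¬ G.Adj v a := fun hh => ha.2 ⟨Finset.mem_univ a, hh⟩
    have hvb : ¬ G.Adj v b := fun hh => hb.2 ⟨Finset.mem_univ b, hh⟩
    have hvc : ¬ G.Adj v c := fun hh => hc.2 ⟨Finset.mem_univ c, hh⟩
    by_cases h1 : G.Adj a b
    · by_cases h2 : G.Adj a c
      · by_cases h3 : G.Adj b c
        · exact ⟨a, b, c, hab, hac, hbc, Or.inl ⟨h1, h2, h3⟩⟩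
        · exact ⟨v, b, c, (hb.1.1).symm, (hc.1.1).symm, hbc, Or.inr ⟨hvb, hvc, h3⟩⟩
      · exact ⟨v, a, c, (ha.1.1).symm, (hc.1.1).symm, hac, Or.inr ⟨hva, hvc, h2⟩⟩
    · exact ⟨v, a, b, (ha.1.1).symm, (hb.1.1).symm, hab, Or.inr ⟨hva, hvb, h1⟩⟩

end ram

section counter

lemma not_hasRegEq_aux {n : ℕ} (G : SimpleGraph (Fin n)) [DecidableRel G.Adj]
    (h : ∀ t : Finset (Fin n), t.card = 3 →
      ∃ v ∈ t, ∃ w ∈ t, (t.filter (G.Adj v)).card ≠ (t.filter (G.Adj w)).card) :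
    ¬ HasRegEq G 3 := by
  rintro ⟨s, hs, d, hd⟩
  obtain ⟨t, rfl⟩ := s.toFinite.exists_finset_coe
  rw [Set.ncard_coe_finset] at hs
  obtain ⟨v, hv, w, hw, hne⟩ := h t hs
  apply hne
  rw [← ncard_coe_inter, ← ncard_coe_inter, hd v (Finset.mem_coe.mpr hv),
    hd w (Finset.mem_coe.mpr hw)]

lemma not_hasRegGe_aux {n : ℕ} (G : SimpleGraph (Fin n)) [DecidableRel G.Adj]
    (h : ∀ t : Finset (Fin n), 3 ≤ t.card →
      ∃ v ∈ t, ∃ w ∈ t, (t.filter (G.Adj v)).card ≠ (t.filter (G.Adj w)).card) :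
    ¬ HasRegGe G 3 := by
  rintro ⟨s, hs, d, hd⟩
  obtain ⟨t, rfl⟩ := s.toFinite.exists_finset_coe
  rw [Set.ncard_coe_finset] at hs
  obtain ⟨v, hv, w, hw, hne⟩ := h t hs
  apply hne
  rw [← ncard_coe_inter, ← ncard_coe_inter, hd v (Finset.mem_coe.mpr hv),
    hd w (Finset.mem_coe.mpr hw)]

def pathG (n : ℕ) : SimpleGraph (Fin n) where
  Adj i j := i.val + 1 = j.val ∨ j.val + 1 = i.val
  symm := by constructor; intro i j h; tauto
  loopless := by constructor; intro i h; rcases h with h | h <;> omega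

instance pathG.decRel (n : ℕ) : DecidableRel (pathG n).Adj :=
  fun i j => inferInstanceAs (Decidable (i.val + 1 = j.val ∨ j.val + 1 = i.val))

def cycle5 : SimpleGraph (Fin 5) where
  Adj i j := (i.val + 1) % 5 = j.val ∨ (j.val + 1) % 5 = i.val
  symm := by constructor; intro i j h; tauto
  loopless := by constructor; intro i h; have := i.isLt; rcases h with h | h <;> omega

instance cycle5.decRel : DecidableRel cycle5.Adj :=
  fun i j => inferInstanceAs (Decidable ((i.val + 1) % 5 = j.val ∨ (j.val + 1) % 5 = i.val))

lemma c5_check : ∀ t : Finset (Fin 5), t.card = 3 →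
    ∃ v ∈ t, ∃ w ∈ t, (t.filter (cycle5.Adj v)).card ≠ (t.filter (cycle5.Adj w)).card := by
  decide

lemma p4_checkEq : ∀ t : Finset (Fin 4), t.card = 3 →
    ∃ v ∈ t, ∃ w ∈ t, (t.filter ((pathG 4).Adj v)).card ≠ (t.filter ((pathG 4).Adj w)).card := by
  decide

lemma p4_checkGe : ∀ t : Finset (Fin 4), 3 ≤ t.card →
    ∃ v ∈ t, ∃ w ∈ t, (t.filter ((pathG 4).Adj v)).card ≠ (t.filter ((pathG 4).Adj w)).card := by
  decide

lemma p3_checkGe : ∀ t : Finset (Fin 3), 3 ≤ t.card →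
    ∃ v ∈ t, ∃ w ∈ t, (t.filter ((pathG 3).Adj v)).card ≠ (t.filter ((pathG 3).Adj w)).card := by
  decide

lemma p3_checkEq : ∀ t : Finset (Fin 3), t.card = 3 →
    ∃ v ∈ t, ∃ w ∈ t, (t.filter ((pathG 3).Adj v)).card ≠ (t.filter ((pathG 3).Adj w)).card := by
  decide

lemma small_no_reg {n : ℕ} (hn : n < 3) (G : SimpleGraph (Fin n)) (s : Set (Fin n))
    (hs : 3 ≤ s.ncard) : False := by
  have h1 : s.ncard ≤ (Set.univ : Set (Fin n)).ncard :=
    Set.ncard_le_ncard (Set.subset_univ s) Set.finite_univ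
  rw [Set.ncard_univ, Nat.card_eq_fintype_card, Fintype.card_fin] at h1
  omega

end counter

lemma degree_split {n : ℕ} (G : SimpleGraph (Fin n)) [DecidableRel G.Adj] (v : Fin n) :
    (univ.filter (G.Adj v)).card + ((univ.erase v) \ univ.filter (G.Adj v)).card = n - 1 := by
  have hsub : univ.filter (G.Adj v) ⊆ univ.erase v := by
    intro w hw
    rw [Finset.mem_filter] at hw
    exact Finset.mem_erase.mpr ⟨hw.2.ne', Finset.mem_univ w⟩
  have hcard : (univ.erase v).card = n - 1 := by
    rw [Finset.card_erase_of_mem (Finset.mem_univ v), Finset.card_univ, Fintype.card_fin]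
  rw [Finset.card_sdiff_of_subset hsub, ← hcard]
  have := Finset.card_le_card hsub
  omega

lemma hasRegEq6 (G : SimpleGraph (Fin 6)) : HasRegEq G 3 := by
  classical
  have hsplit := degree_split G 0
  have h : 2 < (univ.filter (G.Adj 0)).card ∨
      2 < ((univ.erase 0) \ univ.filter (G.Adj 0)).card := by omega
  obtain ⟨a, b, c, hab, hac, hbc, htri⟩ := exists_triple G 0 h
  exact hasRegEq_of_triple G hab hac hbc htri

lemma hasRegGe5 (G : SimpleGraph (Fin 5)) : HasRegGe G 3 := by
  classical
  by_cases htrip : ∃ a b c : Fin 5, a ≠ b ∧ a ≠ c ∧ b ≠ c ∧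
      ((G.Adj a b ∧ G.Adj a c ∧ G.Adj b c) ∨ (¬G.Adj a b ∧ ¬G.Adj a c ∧ ¬G.Adj b c))
  · obtain ⟨a, b, c, hab, hac, hbc, htri⟩ := htrip
    obtain ⟨s, hs, hreg⟩ := hasRegEq_of_triple G hab hac hbc htri
    exact ⟨s, by omega, hreg⟩
  · have hdeg : ∀ v : Fin 5, (univ.filter (G.Adj v)).card = 2 := by
      intro v
      have hsplit := degree_split G v
      have hnot : ¬ (2 < (univ.filter (G.Adj v)).card ∨
          2 < ((univ.erase v) \ univ.filter (G.Adj v)).card) := by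
        intro h
        exact htrip (exists_triple G v h)
      push_neg at hnot
      omega
    refine ⟨Set.univ, ?_, 2, fun v _ => ?_⟩
    · rw [Set.ncard_univ, Nat.card_eq_fintype_card, Fintype.card_fin]; omega
    · rw [Set.univ_inter]
      have : {w | G.Adj v w} = ((univ.filter (G.Adj v) : Finset (Fin 5)) : Set (Fin 5)) := by
        ext x; simp
      rw [this, Set.ncard_coe_finset, hdeg v]

theorem Neq_three_and_Nge_three :
    (∀ G : SimpleGraph (Fin 6), HasRegEq G 3) ∧
    (∃ G : SimpleGraph (Fin 5), ¬ HasRegEq G 3) ∧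
    (∀ G : SimpleGraph (Fin 5), HasRegGe G 3) ∧
    (∃ G : SimpleGraph (Fin 4), ¬ HasRegGe G 3) ∧
    Neq 3 = 6 ∧ Nge 3 = 5 := by
  have hC5 : ¬ HasRegEq cycle5 3 := not_hasRegEq_aux cycle5 c5_check
  have hP4ge : ¬ HasRegGe (pathG 4) 3 := not_hasRegGe_aux _ p4_checkGe
  have hP4eq : ¬ HasRegEq (pathG 4) 3 := not_hasRegEq_aux _ p4_checkEq
  have hP3ge : ¬ HasRegGe (pathG 3) 3 := not_hasRegGe_aux _ p3_checkGe
  have hP3eq : ¬ HasRegEq (pathG 3) 3 := not_hasRegEq_aux _ p3_checkEq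
  refine ⟨hasRegEq6, ⟨cycle5, hC5⟩, hasRegGe5, ⟨pathG 4, hP4ge⟩, ?_, ?_⟩
  · apply le_antisymm
    · exact Nat.sInf_le (fun G => hasRegEq6 G)
    · refine le_csInf ⟨6, fun G => hasRegEq6 G⟩ ?_
      intro n hn
      by_contra hlt
      push_neg at hlt
      have hn' : ∀ G : SimpleGraph (Fin n), HasRegEq G 3 := hn
      interval_cases n
      · obtain ⟨s, hs, _⟩ := hn' ⊥
        exact small_no_reg (by norm_num) ⊥ s (by omega)
      · obtain ⟨s, hs, _⟩ := hn' ⊥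
        exact small_no_reg (by norm_num) ⊥ s (by omega)
      · obtain ⟨s, hs, _⟩ := hn' ⊥
        exact small_no_reg (by norm_num) ⊥ s (by omega)
      · exact hP3eq (hn' (pathG 3))
      · exact hP4eq (hn' (pathG 4))
      · exact hC5 (hn' cycle5)
  · apply le_antisymm
    · exact Nat.sInf_le (fun G => hasRegGe5 G)
    · refine le_csInf ⟨5, fun G => hasRegGe5 G⟩ ?_
      intro n hn
      by_contra hlt
      push_neg at hlt
      have hn' : ∀ G : SimpleGraph (Fin n), HasRegGe G 3 := hn
      interval_cases n
      · obtain ⟨s, hs, _⟩ := hn' ⊥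
        exact small_no_reg (by norm_num) ⊥ s hs
      · obtain ⟨s, hs, _⟩ := hn' ⊥
        exact small_no_reg (by norm_num) ⊥ s hs
      · obtain ⟨s, hs, _⟩ := hn' ⊥
        exact small_no_reg (by norm_num) ⊥ s hs
      · exact hP3ge (hn' (pathG 3))
      · exact hP4ge (hn' (pathG 4))
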